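/- arXiv:2508.11842 — 2 statements merged into one kernel-verified Lean document; each statement's English description precedes it below -/
import Mathlib

section
/- In the balls-into-bins model where m balls are thrown independently and uniformly at random into n bins (n ≥ 2), for any two distinct bins i ≠ j, the probability that both bin i and bin j receive an odd number of balls equals (1/4) · (1 − 2(1 − 2/n)^m + (1 − 4/n)^m). -/
open Finset

lemma sum_prod_comp (m n : ℕ) (g : Fin n → ℝ) :
    ∑ ω : Fin m → Fin n, ∏ k, g (ω k) = (∑ v, g v) ^ m := by
  have : (∑ v, g v) ^ m = ∏ _k : Fin m, (∑ v, g v) := by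
    rw [Finset.prod_const, Finset.card_univ, Fintype.card_fin]
  rw [this, Finset.prod_univ_sum, Fintype.piFinset_univ]

lemma prod_ite_card {m : ℕ} (p : Fin m → Prop) [DecidablePred p] :
    ∏ k, (if p k then (-1:ℝ) else 1) = (-1) ^ (univ.filter p).card := by
  rw [Finset.prod_ite, Finset.prod_const, Finset.prod_const, one_pow, mul_one]

lemma ind_odd (a b : ℕ) :
    (if (Odd a ∧ Odd b) then (1:ℝ) else 0)
      = (1 - (-1:ℝ)^a - (-1:ℝ)^b + (-1:ℝ)^(a+b))/4 := by
  rcases Nat.even_or_odd a with ha | ha <;> rcases Nat.even_or_odd b with hb | hb <;>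
    simp [Nat.not_odd_iff_even.mpr, ha, hb, pow_add,
      Even.neg_one_pow, Odd.neg_one_pow, Nat.not_odd_iff_even.symm] <;>
  first
    | norm_num
    | (simp [Nat.not_odd_iff_even.mpr ha, Nat.not_odd_iff_even.mpr hb] <;> norm_num)

set_option maxHeartbeats 1000000 in
/-- Balls-into-bins: `m` balls are thrown independently and uniformly at random into `n ≥ 2`
bins (an outcome is a function `ω : Fin m → Fin n`, all `n^m` outcomes equally likely).
For any two distinct bins `i ≠ j`, the probability that both bins receive an odd number
of balls equals `(1/4) · (1 - 2(1 - 2/n)^m + (1 - 4/n)^m)`. -/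
theorem prob_two_bins_odd (m n : ℕ) (hn : 2 ≤ n) (i j : Fin n) (hij : i ≠ j) :
    ((Finset.univ.filter (fun ω : Fin m → Fin n =>
        Odd (Finset.univ.filter (fun k => ω k = i)).card ∧
        Odd (Finset.univ.filter (fun k => ω k = j)).card)).card : ℝ) / (n : ℝ) ^ m =
      (1 / 4) * (1 - 2 * (1 - 2 / (n : ℝ)) ^ m + (1 - 4 / (n : ℝ)) ^ m) := by
  have hn0 : (n:ℝ) ≠ 0 := by positivity
  set A : (Fin m → Fin n) → ℕ := fun ω => (univ.filter (fun k => ω k = i)).card with hAdef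
  set B : (Fin m → Fin n) → ℕ := fun ω => (univ.filter (fun k => ω k = j)).card with hBdef
  -- signed sum for one bin
  have key : ∀ c : Fin n, ∑ ω : Fin m → Fin n, (-1:ℝ) ^ (univ.filter (fun k => ω k = c)).card
      = ((n:ℝ) - 2) ^ m := by
    intro c
    have h1 : ∀ ω : Fin m → Fin n, (-1:ℝ) ^ (univ.filter (fun k => ω k = c)).card
        = ∏ k, (if ω k = c then (-1:ℝ) else 1) := fun ω => (prod_ite_card _).symm
    rw [Finset.sum_congr rfl (fun ω _ => h1 ω),
      show (∑ ω : Fin m → Fin n, ∏ k, if ω k = c then (-1:ℝ) else 1)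
        = (∑ v : Fin n, if v = c then (-1:ℝ) else 1) ^ m from sum_prod_comp m n (fun v => if v = c then (-1:ℝ) else 1)]
    have h2 : ∑ v : Fin n, (if v = c then (-1:ℝ) else 1) = (n:ℝ) - 2 := by
      have : ∀ v : Fin n, (if v = c then (-1:ℝ) else 1)
          = 1 - (if v = c then (2:ℝ) else 0) := by intro v; split_ifs <;> ring
      rw [Finset.sum_congr rfl (fun v _ => this v), Finset.sum_sub_distrib,
        Finset.sum_const, Finset.sum_ite_eq' univ c (fun _ => (2:ℝ))]
      simp
    rw [h2]
  have hA : ∑ ω : Fin m → Fin n, (-1:ℝ) ^ (A ω) = ((n:ℝ) - 2) ^ m := key i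
  have hB : ∑ ω : Fin m → Fin n, (-1:ℝ) ^ (B ω) = ((n:ℝ) - 2) ^ m := key j
  -- signed sum for both bins
  have hAB : ∑ ω : Fin m → Fin n, (-1:ℝ) ^ (A ω + B ω) = ((n:ℝ) - 4) ^ m := by
    have hcard : ∀ ω : Fin m → Fin n,
        A ω + B ω = (univ.filter (fun k => ω k = i ∨ ω k = j)).card := by
      intro ω
      rw [Finset.filter_or, Finset.card_union_of_disjoint]
      exact Finset.disjoint_filter.2 fun k _ h1 h2 => hij (h1 ▸ h2 ▸ rfl)
    have h1 : ∀ ω : Fin m → Fin n, (-1:ℝ) ^ (A ω + B ω)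
        = ∏ k, (if ω k = i ∨ ω k = j then (-1:ℝ) else 1) := by
      intro ω; rw [hcard ω]; exact (prod_ite_card _).symm
    rw [Finset.sum_congr rfl (fun ω _ => h1 ω),
      show (∑ ω : Fin m → Fin n, ∏ k, if ω k = i ∨ ω k = j then (-1:ℝ) else 1)
        = (∑ v : Fin n, if v = i ∨ v = j then (-1:ℝ) else 1) ^ m from sum_prod_comp m n (fun v => if v = i ∨ v = j then (-1:ℝ) else 1)]
    have h2 : ∑ v : Fin n, (if v = i ∨ v = j then (-1:ℝ) else 1) = (n:ℝ) - 4 := by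
      have : ∀ v : Fin n, (if v = i ∨ v = j then (-1:ℝ) else 1)
          = 1 - (if v = i then (2:ℝ) else 0) - (if v = j then (2:ℝ) else 0) := by
        intro v
        rcases eq_or_ne v i with h | h <;> rcases eq_or_ne v j with h' | h' <;>
          simp_all <;> first | ring | (exact absurd (h ▸ h') hij) 
      rw [Finset.sum_congr rfl (fun v _ => this v)]
      rw [Finset.sum_sub_distrib, Finset.sum_sub_distrib, Finset.sum_const,
        Finset.sum_ite_eq' univ i (fun _ => (2:ℝ)), Finset.sum_ite_eq' univ j (fun _ => (2:ℝ))]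
      simp; ring
    rw [h2]
  -- the count as a signed sum
  have hcount : ((univ.filter (fun ω : Fin m → Fin n => Odd (A ω) ∧ Odd (B ω))).card : ℝ)
      = ((n:ℝ)^m - 2 * ((n:ℝ) - 2)^m + ((n:ℝ) - 4)^m) / 4 := by
    have h0 : ((univ.filter (fun ω : Fin m → Fin n => Odd (A ω) ∧ Odd (B ω))).card : ℝ)
        = ∑ ω : Fin m → Fin n, (if Odd (A ω) ∧ Odd (B ω) then (1:ℝ) else 0) := by
      rw [Finset.card_filter]
      push_cast
      exact Finset.sum_congr rfl fun ω _ => by split_ifs <;> simp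
    rw [h0, Finset.sum_congr rfl (fun ω _ => ind_odd (A ω) (B ω))]
    rw [← Finset.sum_div]
    congr 1
    have hsplit : ∑ ω : Fin m → Fin n,
        (1 - (-1:ℝ)^(A ω) - (-1:ℝ)^(B ω) + (-1:ℝ)^(A ω + B ω))
        = (∑ _ω : Fin m → Fin n, (1:ℝ)) - (∑ ω, (-1:ℝ)^(A ω))
          - (∑ ω, (-1:ℝ)^(B ω)) + (∑ ω, (-1:ℝ)^(A ω + B ω)) := by
      rw [Finset.sum_add_distrib, Finset.sum_sub_distrib, Finset.sum_sub_distrib]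
    rw [hsplit, hA, hB, hAB]
    have : (∑ _ω : Fin m → Fin n, (1:ℝ)) = (n:ℝ)^m := by
      simp [Finset.card_univ]
    rw [this]; ring
  rw [hcount]
  have hnm : (n:ℝ)^m ≠ 0 := pow_ne_zero _ hn0
  have e2 : (1 - 2/(n:ℝ))^m = ((n:ℝ) - 2)^m / (n:ℝ)^m := by
    rw [← div_pow]; congr 1; field_simp
  have e4 : (1 - 4/(n:ℝ))^m = ((n:ℝ) - 4)^m / (n:ℝ)^m := by
    rw [← div_pow]; congr 1; field_simp
  rw [e2, e4]
  field_simp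
end

section
/- In the balls-into-bins model where m balls are thrown independently and uniformly at random into n bins (n ≥ 2), let z be the number of bins receiving an odd number of balls. Then the variance of z equals (n²/4) · ((1 − 4/n)^m − (1 − 2/n)^{2m}) + (n/4) · (1 − (1 − 4/n)^m). -/
open Finset

/-- In the balls-into-bins model (`m` balls thrown independently and uniformly at random
into `n` bins; an outcome is `ω : Fin m → Fin n`), `ballsOddBins m n ω` is the number of
bins receiving an odd number of balls. -/
def ballsOddBins (m n : ℕ) (ω : Fin m → Fin n) : ℕ :=
  (Finset.univ.filter (fun i : Fin n =>
      Odd (Finset.univ.filter (fun j => ω j = i)).card)).card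

namespace VarOddBins

noncomputable def F (m n : ℕ) (i : Fin n) (ω : Fin m → Fin n) : ℝ :=
  (-1) ^ (Finset.univ.filter (fun j => ω j = i)).card

lemma sum_prod_fn (m n : ℕ) (f : Fin n → ℝ) :
    ∑ ω : Fin m → Fin n, ∏ j : Fin m, f (ω j) = (∑ x : Fin n, f x) ^ m := by
  rw [← Fintype.piFinset_univ, ← Finset.prod_univ_sum]
  simp

lemma F_eq_prod (m n : ℕ) (i : Fin n) (ω : Fin m → Fin n) :
    F m n i ω = ∏ j : Fin m, (if ω j = i then (-1 : ℝ) else 1) := by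
  rw [F, Finset.card_filter, ← Finset.prod_pow_eq_pow_sum]
  exact Finset.prod_congr rfl fun j _ => by split <;> simp

lemma sum_ite_mem (n : ℕ) (s : Finset (Fin n)) :
    ∑ x : Fin n, (if x ∈ s then (-1 : ℝ) else 1) = n - 2 * s.card := by
  have h : ∀ x : Fin n, (if x ∈ s then (-1:ℝ) else 1)
      = 1 - 2 * (if x ∈ s then (1:ℝ) else 0) := by
    intro x; split <;> ring
  rw [Finset.sum_congr rfl fun x _ => h x, Finset.sum_sub_distrib, ← Finset.mul_sum]
  simp [Finset.sum_boole]

lemma sumF (m n : ℕ) (i : Fin n) :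
    ∑ ω : Fin m → Fin n, F m n i ω = ((n:ℝ) - 2) ^ m := by
  simp only [F_eq_prod]
  refine Eq.trans (sum_prod_fn m n fun x => if x = i then (-1:ℝ) else 1) ?_
  congr 1
  have := sum_ite_mem n {i}
  simpa using this

lemma sumFF_ne (m n : ℕ) {i k : Fin n} (h : i ≠ k) :
    ∑ ω : Fin m → Fin n, F m n i ω * F m n k ω = ((n:ℝ) - 4) ^ m := by
  simp only [F_eq_prod, ← Finset.prod_mul_distrib]
  refine Eq.trans (sum_prod_fn m n fun x =>
    (if x = i then (-1:ℝ) else 1) * (if x = k then (-1:ℝ) else 1)) ?_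
  congr 1
  have key : ∀ x : Fin n,
      (if x = i then (-1:ℝ) else 1) * (if x = k then (-1:ℝ) else 1)
        = if x ∈ ({i, k} : Finset (Fin n)) then (-1:ℝ) else 1 := by
    intro x
    by_cases hi : x = i <;> by_cases hk : x = k <;>
      simp_all [Finset.mem_insert, Finset.mem_singleton]
  rw [Finset.sum_congr rfl fun x _ => key x, sum_ite_mem]
  rw [Finset.card_insert_of_notMem (by simpa using h), Finset.card_singleton]
  norm_num

lemma sumFF_eq (m n : ℕ) (i : Fin n) :
    ∑ ω : Fin m → Fin n, F m n i ω * F m n i ω = (n:ℝ) ^ m := by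
  have h : ∀ ω : Fin m → Fin n, F m n i ω * F m n i ω = 1 := by
    intro ω
    rw [F, ← pow_add]
    exact Even.neg_one_pow ⟨_, rfl⟩
  rw [Finset.sum_congr rfl fun ω _ => h ω]
  simp [Finset.card_univ]

lemma ballsOdd_eq (m n : ℕ) (ω : Fin m → Fin n) :
    (ballsOddBins m n ω : ℝ) = ∑ i : Fin n, (1 - F m n i ω) / 2 := by
  rw [ballsOddBins, Finset.card_filter]
  push_cast
  refine Finset.sum_congr rfl fun i _ => ?_
  by_cases h : Odd (Finset.univ.filter (fun j => ω j = i)).card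
  · rw [if_pos h, F, h.neg_one_pow]; norm_num
  · rw [if_neg h, F, (Nat.not_odd_iff_even.mp h).neg_one_pow]; norm_num

end VarOddBins

open VarOddBins in
/-- Balls-into-bins with `n ≥ 2` bins, all `n^m` outcomes equally likely: the variance of
`z`, the number of bins receiving an odd number of balls, equals
`(n²/4)((1 - 4/n)^m - (1 - 2/n)^{2m}) + (n/4)(1 - (1 - 4/n)^m)`. -/
theorem variance_odd_bins (m n : ℕ) (hn : 2 ≤ n) :
    (∑ ω : Fin m → Fin n, ((ballsOddBins m n ω : ℝ)) ^ 2) / (n : ℝ) ^ m -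
        ((∑ ω : Fin m → Fin n, (ballsOddBins m n ω : ℝ)) / (n : ℝ) ^ m) ^ 2 =
      ((n : ℝ) ^ 2 / 4) * ((1 - 4 / (n : ℝ)) ^ m - (1 - 2 / (n : ℝ)) ^ (2 * m)) +
        ((n : ℝ) / 4) * (1 - (1 - 4 / (n : ℝ)) ^ m) := by
  have hnpos : (0:ℝ) < n := by exact_mod_cast lt_of_lt_of_le two_pos hn
  have hn0 : (n:ℝ) ≠ 0 := hnpos.ne'
  have hNm : ((n:ℝ)) ^ m ≠ 0 := pow_ne_zero _ hn0
  have hcard : ∑ _ω : Fin m → Fin n, (1:ℝ) = (n:ℝ) ^ m := by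
    simp [Finset.card_univ]
  have hS1 : ∑ ω : Fin m → Fin n, (ballsOddBins m n ω : ℝ)
      = (n : ℝ) * ((n:ℝ) ^ m - ((n:ℝ) - 2) ^ m) / 2 := by
    simp only [ballsOdd_eq]
    rw [Finset.sum_comm]
    have h1 : ∀ i : Fin n, ∑ ω : Fin m → Fin n, (1 - F m n i ω) / 2
        = ((n:ℝ) ^ m - ((n:ℝ) - 2) ^ m) / 2 := by
      intro i
      rw [← Finset.sum_div, Finset.sum_sub_distrib, sumF, hcard]
    rw [Finset.sum_congr rfl fun i _ => h1 i, Finset.sum_const, Finset.card_univ]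
    simp [nsmul_eq_mul]
    ring
  have hT : ∀ i k : Fin n, ∑ ω : Fin m → Fin n, F m n i ω * F m n k ω
      = if i = k then (n:ℝ) ^ m else ((n:ℝ) - 4) ^ m := by
    intro i k
    by_cases h : i = k
    · subst h; simp [sumFF_eq]
    · simp [h, sumFF_ne m n h]
  have hS2 : ∑ ω : Fin m → Fin n, (ballsOddBins m n ω : ℝ) ^ 2
      = ((n:ℝ) ^ 2 * ((n:ℝ) ^ m - 2 * ((n:ℝ) - 2) ^ m) + (n:ℝ) * (n:ℝ) ^ m
          + (n:ℝ) * ((n:ℝ) - 1) * ((n:ℝ) - 4) ^ m) / 4 := by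
    have hexp : ∀ ω : Fin m → Fin n, (ballsOddBins m n ω : ℝ) ^ 2
        = ∑ i : Fin n, ∑ k : Fin n,
            (1 - F m n i ω - F m n k ω + F m n i ω * F m n k ω) / 4 := by
      intro ω
      rw [ballsOdd_eq, pow_two, Finset.sum_mul_sum]
      exact Finset.sum_congr rfl fun i _ => Finset.sum_congr rfl fun k _ => by ring
    rw [Finset.sum_congr rfl fun ω _ => hexp ω, Finset.sum_comm]
    have hswap : ∀ i : Fin n, ∑ ω : Fin m → Fin n, ∑ k : Fin n,
        (1 - F m n i ω - F m n k ω + F m n i ω * F m n k ω) / 4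
        = ∑ k : Fin n, ∑ ω : Fin m → Fin n,
            (1 - F m n i ω - F m n k ω + F m n i ω * F m n k ω) / 4 :=
      fun i => Finset.sum_comm
    rw [Finset.sum_congr rfl fun i _ => hswap i]
    have hinner : ∀ i k : Fin n, ∑ ω : Fin m → Fin n,
        (1 - F m n i ω - F m n k ω + F m n i ω * F m n k ω) / 4
        = ((n:ℝ) ^ m - 2 * ((n:ℝ) - 2) ^ m
            + (if i = k then (n:ℝ) ^ m else ((n:ℝ) - 4) ^ m)) / 4 := by
      intro i k
      rw [← Finset.sum_div, Finset.sum_add_distrib, Finset.sum_sub_distrib,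
        Finset.sum_sub_distrib, sumF, sumF, hcard, hT]
      ring_nf
    rw [Finset.sum_congr rfl fun i _ =>
      Finset.sum_congr rfl fun k _ => hinner i k]
    have hk : ∀ i : Fin n, ∑ k : Fin n,
        ((n:ℝ) ^ m - 2 * ((n:ℝ) - 2) ^ m
          + (if i = k then (n:ℝ) ^ m else ((n:ℝ) - 4) ^ m)) / 4
        = ((n:ℝ) * ((n:ℝ) ^ m - 2 * ((n:ℝ) - 2) ^ m)
            + ((n:ℝ) ^ m + ((n:ℝ) - 1) * ((n:ℝ) - 4) ^ m)) / 4 := by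
      intro i
      rw [← Finset.sum_div]
      congr 1
      have hre : ∀ k : Fin n, ((n:ℝ) ^ m - 2 * ((n:ℝ) - 2) ^ m
            + (if i = k then (n:ℝ) ^ m else ((n:ℝ) - 4) ^ m))
          = ((n:ℝ) ^ m - 2 * ((n:ℝ) - 2) ^ m + ((n:ℝ) - 4) ^ m)
            + (if i = k then (n:ℝ) ^ m - ((n:ℝ) - 4) ^ m else 0) := by
        intro k; split <;> ring
      rw [Finset.sum_congr rfl fun k _ => hre k, Finset.sum_add_distrib,
        Finset.sum_const, Finset.card_univ, Finset.sum_ite_eq]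
      simp [nsmul_eq_mul]
      ring
    rw [Finset.sum_congr rfl fun i _ => hk i, Finset.sum_const, Finset.card_univ]
    simp [nsmul_eq_mul]
    ring
  rw [hS1, hS2]
  have h4 : (1 - 4 / (n:ℝ)) = ((n:ℝ) - 4) / n := by field_simp
  have h2 : (1 - 2 / (n:ℝ)) = ((n:ℝ) - 2) / n := by field_simp
  rw [h4, h2, div_pow, div_pow]
  field_simp
  simp only [div_pow]
  field_simp
  ring
end
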